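/- The publishers game with the linear RRP ranking function (continuous strategy space [0,1]^k, continuous distance functions d*, d_0) has at least one pure Nash equilibrium, obtained as a global maximizer of the continuous potential φ(x) = Σ_i (−(1/n)·d*(x_i) − λ·d_0(x_i)) on the compact set ([0,1]^k)^n. -/
import Mathlib


noncomputable section

def relRel (n k : ℕ) (dstar : (Fin k → ℝ) → ℝ) (x : Fin n → (Fin k → ℝ))
    (i : Fin n) : ℝ :=
  (1 / ((n : ℝ) - 1)) * (∑ j ∈ Finset.univ.erase i, dstar (x j)) - dstar (x i)

/-- Utility under the linear RRP ranking function. -/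
def util (n k : ℕ) (lam : ℝ) (dstar : (Fin k → ℝ) → ℝ)
    (d0 : Fin n → (Fin k → ℝ) → ℝ) (x : Fin n → (Fin k → ℝ)) (i : Fin n) : ℝ :=
  (1 / (n : ℝ)) * relRel n k dstar x i + 1 / (n : ℝ) - lam * d0 i (x i)

/-- The publishers game with the linear RRP ranking function, compact strategy
space [0,1]^k and continuous d*, d_0 has a pure Nash equilibrium, obtained as
a maximizer of the continuous potential φ(x) = ∑_i (−(1/n)d*(x_i) − λd_0(x_i)). -/
theorem linRank_pure_nash_exists (n k : ℕ) (hn : 2 ≤ n) (lam : ℝ) (hlam : 0 < lam)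
    (dstar : (Fin k → ℝ) → ℝ) (hdc : Continuous dstar)
    (hdstar : ∀ y, dstar y ∈ Set.Icc (0 : ℝ) 1)
    (d0 : Fin n → (Fin k → ℝ) → ℝ) (hd0c : ∀ i, Continuous (d0 i))
    (hd0 : ∀ i y, d0 i y ∈ Set.Icc (0 : ℝ) 1) :
    ∃ x : Fin n → (Fin k → ℝ),
      (∀ i, x i ∈ Set.Icc (0 : Fin k → ℝ) 1) ∧
      (∀ y : Fin n → (Fin k → ℝ), (∀ i, y i ∈ Set.Icc (0 : Fin k → ℝ) 1) →
        (∑ i, (-(1 / (n : ℝ)) * dstar (y i) - lam * d0 i (y i))) ≤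
          ∑ i, (-(1 / (n : ℝ)) * dstar (x i) - lam * d0 i (x i))) ∧
      ∀ (i : Fin n), ∀ y ∈ Set.Icc (0 : Fin k → ℝ) 1,
        util n k lam dstar d0 (Function.update x i y) i ≤
          util n k lam dstar d0 x i := by
  classical
  set f : Fin n → (Fin k → ℝ) → ℝ :=
    fun i z => -(1 / (n : ℝ)) * dstar z - lam * d0 i z with hf
  set φ : (Fin n → (Fin k → ℝ)) → ℝ := fun x => ∑ i, f i (x i) with hφdef
  have hφc : Continuous φ := by
    apply continuous_finset_sum
    intro i _
    exact (continuous_const.mul (hdc.comp (continuous_apply i))).sub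
      (continuous_const.mul ((hd0c i).comp (continuous_apply i)))
  set S : Set (Fin n → (Fin k → ℝ)) :=
    Set.univ.pi (fun _ => Set.Icc (0 : Fin k → ℝ) 1) with hSdef
  have hSc : IsCompact S := isCompact_univ_pi (fun _ => isCompact_Icc)
  have hSne : S.Nonempty := ⟨fun _ => 0, fun i _ => ⟨le_refl _, zero_le_one⟩⟩
  obtain ⟨x, hxS, hmax⟩ := hSc.exists_isMaxOn hSne hφc.continuousOn
  have hxmem : ∀ i, x i ∈ Set.Icc (0 : Fin k → ℝ) 1 := fun i => hxS i (Set.mem_univ i)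
  refine ⟨x, hxmem, ?_, ?_⟩
  · intro y hy
    exact hmax (fun i _ => hy i)
  · intro i y hy
    set z := Function.update x i y with hz
    have hzS : z ∈ S := by
      intro j _
      by_cases h : j = i
      · subst h; simpa [hz] using hy
      · simpa [hz, Function.update_of_ne h] using hxmem j
    have hmz : φ z ≤ φ x := hmax hzS
    have hkey : f i y ≤ f i (x i) := by
      have h1 : φ z = f i y + ∑ j ∈ Finset.univ.erase i, f j (x j) := by
        show (∑ j, f j (z j)) = _
        rw [← Finset.add_sum_erase _ _ (Finset.mem_univ i)]
        congr 1
        · simp [hz]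
        · exact Finset.sum_congr rfl fun j hj =>
            by rw [hz, Function.update_of_ne (Finset.ne_of_mem_erase hj)]
      have h2 : φ x = f i (x i) + ∑ j ∈ Finset.univ.erase i, f j (x j) := by
        show (∑ j, f j (x j)) = _
        rw [← Finset.add_sum_erase _ _ (Finset.mem_univ i)]
      rw [h1, h2] at hmz
      linarith
    have herase : (∑ j ∈ Finset.univ.erase i, dstar (z j))
        = ∑ j ∈ Finset.univ.erase i, dstar (x j) :=
      Finset.sum_congr rfl fun j hj =>
        by rw [hz, Function.update_of_ne (Finset.ne_of_mem_erase hj)]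
    have hzi : z i = y := by simp [hz]
    simp only [util, relRel, herase, hzi, hf] at hkey ⊢
    nlinarith [hkey]

end
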